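/- Let q = 2r where r ≥ 2 is an integer. Then the following identity of Möbius transformations of ℝ∞ holds: T_1^{r} = σ ∘ τ_q^{−1} ∘ σ ∘ T_{−1}^{r−2} ∘ τ_q^{−1}, where powers denote iterated composition. -/

import Mathlib

open OnePoint

noncomputable def lamq (q : ℕ) : ℝ := 2 * Real.cos (Real.pi / q)

abbrev RInf : Type := OnePoint ℝ

noncomputable def sigmaFun : RInf → RInf := fun z =>
  match z with
  | Option.none => ((0 : ℝ) : RInf)
  | Option.some x => if x = 0 then (∞ : RInf) else ((-x⁻¹ : ℝ) : RInf)

lemma sigmaFun_invol (z : RInf) : sigmaFun (sigmaFun z) = z := by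
  cases z with
  | none => simp [sigmaFun, OnePoint.infty] <;> rfl
  | some x =>
    by_cases h : x = 0
    · simp only [sigmaFun, h, if_true, if_pos]
      rfl
    · simp only [sigmaFun, h, if_false]
      have h1 : (-x⁻¹ : ℝ) ≠ 0 := by simpa using h
      simp only [h1, if_false]
      have h2 : (-(-x⁻¹)⁻¹ : ℝ) = x := by
        rw [inv_neg, inv_inv, neg_neg]
      rw [h2]
      rfl

noncomputable def sigmaP : Equiv.Perm RInf :=
  ⟨sigmaFun, sigmaFun, sigmaFun_invol, sigmaFun_invol⟩

noncomputable def tauP (q : ℕ) : Equiv.Perm RInf where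
  toFun z := match z with
    | Option.none => (∞ : RInf)
    | Option.some x => Option.some (x + lamq q)
  invFun z := match z with
    | Option.none => (∞ : RInf)
    | Option.some x => Option.some (x - lamq q)
  left_inv z := by cases z <;> simp [OnePoint.infty] <;> rfl
  right_inv z := by cases z <;> simp [OnePoint.infty] <;> rfl

noncomputable def Gq (q : ℕ) : Subgroup (Equiv.Perm RInf) :=
  Subgroup.closure {sigmaP, tauP q}

def FareyVertex (q : ℕ) (v : RInf) : Prop := ∃ g ∈ Gq q, g ∞ = v

def FareyAdj (q : ℕ) (u v : RInf) : Prop :=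
  u ≠ v ∧ ∃ g ∈ Gq q,
    ((g ((0:ℝ) : RInf) = u ∧ g ∞ = v) ∨ (g ((0:ℝ) : RInf) = v ∧ g ∞ = u))

noncomputable def rhoP (q : ℕ) : Equiv.Perm RInf := tauP q * sigmaP

def V0 (q : ℕ) : Set RInf := {v | ∃ i : ℕ, i < q ∧ (rhoP q ^ i) ∞ = v}

def IsFace (q : ℕ) (P : Set RInf) : Prop := ∃ g ∈ Gq q, P = ⇑g '' V0 q

/-- `y` lies in the connected component of `ℝ∞ \ {u, v}` that does not contain `x`. -/
def SepSide (u v x y : RInf) : Prop :=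
  y ∈ ({u, v}ᶜ : Set RInf) ∧ x ∉ connectedComponentIn ({u, v}ᶜ : Set RInf) y

noncomputable def Tq (q : ℕ) (b : ℤ) : RInf → RInf := fun z =>
  match z with
  | Option.none => ((b * lamq q : ℝ) : RInf)
  | Option.some x => if x = 0 then (∞ : RInf) else ((b * lamq q - x⁻¹ : ℝ) : RInf)

noncomputable def RosenValue (q : ℕ) (bs : List ℤ) : RInf := bs.foldr (Tq q) ∞

def IsGeodesicRosen (q : ℕ) (bs : List ℤ) : Prop :=
  bs ≠ [] ∧ RosenValue q bs ≠ ∞ ∧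
  ∀ cs : List ℤ, cs ≠ [] → RosenValue q cs = RosenValue q bs → bs.length ≤ cs.length

def IsPathFrom (q : ℕ) (p : List RInf) (x y : RInf) : Prop :=
  p.Chain' (FareyAdj q) ∧ p.head? = Option.some x ∧ p.getLast? = Option.some y

def IsGeodesicPath (q : ℕ) (p : List RInf) (x y : RInf) : Prop :=
  IsPathFrom q p x y ∧ ∀ p' : List RInf, IsPathFrom q p' x y → p.length ≤ p'.length

/-- `{u, v}` is a pair of `y`-parents of `x`. -/
def IsParentPair (q : ℕ) (y x u v : RInf) : Prop :=
  ∃ g ∈ Gq q, ∃ i : ℤ,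
    g ((rhoP q ^ i) ∞) = x ∧
    ({u, v} : Set RInf) = {g ((rhoP q ^ (i-1)) ∞), g ((rhoP q ^ (i+1)) ∞)} ∧
    SepSide u v x y

/-- `P 0, …, P (n-1)` is the q-chain from `x` to `y`. -/
def IsQChain (q : ℕ) (x y : RInf) (n : ℕ) (P : ℕ → Set RInf) : Prop :=
  1 ≤ n ∧ (∀ j < n, IsFace q (P j)) ∧
  (∃ g ∈ Gq q, ∃ i : ℤ,
      g ((rhoP q ^ i) ∞) = x ∧ P 0 = ⇑g '' V0 q ∧
      SepSide (g ((rhoP q ^ (i-1)) ∞)) (g ((rhoP q ^ (i+1)) ∞)) x y) ∧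
  y ∈ P (n-1) ∧ (∀ j, j < n - 1 → y ∉ P j) ∧
  (∀ j, j + 1 < n → ∃ a b : RInf, FareyAdj q a b ∧ a ∈ P j ∧ b ∈ P j ∧
      (y ∈ ({a, b}ᶜ : Set RInf) ∧
        ∀ w ∈ P j, w ∉ connectedComponentIn ({a, b}ᶜ : Set RInf) y) ∧
      P (j+1) ≠ P j ∧ a ∈ P (j+1) ∧ b ∈ P (j+1))

/-- Fibonacci numbers with `F 0 = 1`, `F 1 = 2`. -/
def fibF : ℕ → ℕ
  | 0 => 1
  | 1 => 2
  | (n+2) => fibF (n+1) + fibF n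

/-- The transformation `T_b = τ_q^b ∘ σ`, i.e. `z ↦ b·λ_q − 1/z`, as a
permutation of `ℝ∞`. -/
noncomputable def TP (q : ℕ) (b : ℤ) : Equiv.Perm RInf := (tauP q) ^ b * sigmaP

/-- Möbius transformation given by matrix entries. -/
noncomputable def mob (a b c d : ℝ) : RInf → RInf := fun z =>
  match z with
  | Option.none => if c = 0 then (∞ : RInf) else ((a / c : ℝ) : RInf)
  | Option.some x => if c * x + d = 0 then (∞ : RInf)
      else (((a * x + b) / (c * x + d) : ℝ) : RInf)

lemma mob_mul (a b c d e f g h : ℝ) (hA : a * d - b * c ≠ 0)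
    (hB : e * h - f * g ≠ 0) (z : RInf) :
    mob a b c d (mob e f g h z) =
      mob (a*e+b*g) (a*f+b*h) (c*e+d*g) (c*f+d*h) z := by
  cases z with
  | none =>
    by_cases hg : g = 0
    · have he : e ≠ 0 := fun h0 => hB (by rw [hg, h0]; ring)
      simp only [mob, hg, if_pos rfl]
      by_cases hc : c = 0
      · simp [mob, hc, hg, he]
      · have hD : c * e + d * g ≠ 0 := by rw [hg]; simpa [he] using hc
        simp only [if_true, hg, mul_zero, add_zero] at hD ⊢
        simp only [if_neg hc, if_neg hD, OnePoint.coe_eq_coe]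
        field_simp
    · simp only [mob, if_neg hg]
      have key : c * (e/g) + d = (c*e+d*g)/g := by field_simp
      by_cases hD : c*e+d*g = 0
      · have h0 : c*(e/g)+d = 0 := by rw [key, hD, zero_div]
        simp [mob, h0, hD]
      · have h2 : c*(e/g)+d ≠ 0 := by rw [key]; exact div_ne_zero hD hg
        simp only [mob, if_neg h2, if_neg hD, OnePoint.coe_eq_coe]
        rw [key]
        field_simp
  | some x =>
    by_cases hgx : g * x + h = 0
    · have hex : e * x + f ≠ 0 := by
        intro h0
        apply hB
        have hh : h = -(g*x) := by linarith
        have hf : f = -(e*x) := by linarith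
        rw [hh, hf]; ring
      have heq : (c*e+d*g) * x + (c*f+d*h) = c*(e*x+f) + d*(g*x+h) := by ring
      simp only [mob, if_pos hgx]
      by_cases hc : c = 0
      · have hz : d*g*x + d*h = 0 := by
          rw [show d*g*x + d*h = d*(g*x+h) by ring, hgx, mul_zero]
        simp [mob, hc, hz]
      · have hD : (c*e+d*g) * x + (c*f+d*h) ≠ 0 := by
          rw [heq, hgx, mul_zero, add_zero]
          exact mul_ne_zero hc hex
        simp only [mob, if_neg hc, if_neg hD, OnePoint.coe_eq_coe]
        rw [div_eq_div_iff hc hD]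
        linear_combination (a*d - b*c) * hgx
    · simp only [mob, if_neg hgx]
      have key : c * ((e*x+f)/(g*x+h)) + d
          = ((c*e+d*g)*x + (c*f+d*h))/(g*x+h) := by
        rw [mul_div_assoc', div_add' _ _ _ hgx]; congr 1; ring
      by_cases hD : (c*e+d*g)*x + (c*f+d*h) = 0
      · have h0 : c * ((e*x+f)/(g*x+h)) + d = 0 := by rw [key, hD, zero_div]
        simp [mob, h0, hD]
      · have h2 : c * ((e*x+f)/(g*x+h)) + d ≠ 0 := by
          rw [key]; exact div_ne_zero hD hgx
        simp only [mob, if_neg h2, if_neg hD, OnePoint.coe_eq_coe]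
        rw [key, mul_div_assoc', div_add' _ _ _ hgx, div_div_div_cancel_right₀ hgx]
        congr 1; ring

lemma mob_smul (k a b c d : ℝ) (hk : k ≠ 0) (z : RInf) :
    mob (k*a) (k*b) (k*c) (k*d) z = mob a b c d z := by
  cases z with
  | none =>
    by_cases hc : c = 0
    · simp [mob, hc]
    · have h1 : k * c ≠ 0 := mul_ne_zero hk hc
      simp only [mob, if_neg hc, if_neg h1, OnePoint.coe_eq_coe]
      rw [mul_div_mul_left _ _ hk]
  | some x =>
    by_cases hc : c * x + d = 0
    · have h1 : k*c*x + k*d = 0 := by rw [show k*c*x + k*d = k*(c*x+d) by ring, hc, mul_zero]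
      simp [mob, hc, h1]
    · have h1 : k*c*x + k*d ≠ 0 := by
        rw [show k*c*x + k*d = k*(c*x+d) by ring]
        exact mul_ne_zero hk hc
      simp only [mob, if_neg hc, if_neg h1, OnePoint.coe_eq_coe]
      rw [show k*a*x + k*b = k*(a*x+b) by ring, show k*c*x + k*d = k*(c*x+d) by ring,
        mul_div_mul_left _ _ hk]

lemma rho_eq_mob (q : ℕ) : ⇑(tauP q * sigmaP) = mob (lamq q) (-1) 1 0 := by
  funext z
  show tauP q (sigmaP z) = _
  cases z with
  | none =>
    show tauP q (sigmaFun Option.none) = _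
    have l : tauP q (sigmaFun Option.none) = Option.some ((0:ℝ) + lamq q) := rfl
    have r : mob (lamq q) (-1) 1 0 Option.none = Option.some (lamq q / 1) := by
      simp [mob]
      rfl
    rw [l, r]
    congr 1
    ring
  | some x =>
    show tauP q (sigmaFun (Option.some x)) = _
    by_cases hx : x = 0
    · simp [sigmaFun, hx, tauP, mob, OnePoint.infty] <;> rfl
    · have h1 : (1:ℝ) * x + 0 ≠ 0 := by simpa using hx
      simp only [sigmaFun, if_neg hx, mob, if_neg h1]
      show Option.some (-x⁻¹ + lamq q) = _
      rw [show ((((lamq q * x + -1) / (1 * x + 0)) : ℝ) : RInf)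
          = Option.some ((lamq q * x + -1) / (1 * x + 0)) from rfl]
      congr 1
      rw [one_mul, add_zero, add_div, mul_div_assoc, div_self hx]; ring

lemma sin_pi_div_pos (q : ℕ) (hq : 2 ≤ q) : 0 < Real.sin (Real.pi / q) := by
  apply Real.sin_pos_of_pos_of_lt_pi
  · positivity
  · have h1 : (1:ℝ) < (q:ℝ) := by exact_mod_cast hq.trans_lt' one_lt_two
    calc Real.pi / q < Real.pi / 1 := by
          apply div_lt_div_of_pos_left Real.pi_pos one_pos h1
      _ = Real.pi := by ring

lemma rho_pow_eq_mob (q : ℕ) (hq : 2 ≤ q) (n : ℕ) :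
    ⇑((tauP q * sigmaP) ^ (n+1)) =
      mob (Real.sin ((n+2) * (Real.pi/q))) (-(Real.sin ((n+1) * (Real.pi/q))))
          (Real.sin ((n+1) * (Real.pi/q))) (-(Real.sin (n * (Real.pi/q)))) := by
  set θ := Real.pi / q with hθ
  have hs : Real.sin θ ≠ 0 := (sin_pi_div_pos q hq).ne'
  have hlam : lamq q = 2 * Real.cos θ := by rw [lamq, hθ]
  have hrec : ∀ A : ℝ, Real.sin (A + θ) = lamq q * Real.sin A - Real.sin (A - θ) := by
    intro A
    rw [hlam, Real.sin_add, Real.sin_sub]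
    ring
  induction n with
  | zero =>
    rw [pow_one, rho_eq_mob]
    funext z
    rw [← mob_smul (Real.sin θ) (lamq q) (-1) 1 0 hs z]
    have e1 : Real.sin θ * lamq q = Real.sin (((0:ℕ)+2) * θ) := by
      push_cast
      rw [show ((0:ℝ)+2) * θ = 2*θ by ring, Real.sin_two_mul, hlam]
      ring
    have e2 : Real.sin θ * (-1) = -(Real.sin (((0:ℕ)+1) * θ)) := by
      push_cast
      rw [show ((0:ℝ)+1) * θ = θ by ring]
      ring
    have e4 : Real.sin θ * 0 = -(Real.sin ((0:ℕ) * θ)) := by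
      push_cast
      simp
    rw [e1, e2, e4]
    have e3 : Real.sin θ * 1 = Real.sin (((0:ℕ)+1) * θ) := by
      push_cast
      rw [show ((0:ℝ)+1) * θ = θ by ring]
      ring
    rw [e3]
  | succ n ih =>
    have hstep : (tauP q * sigmaP) ^ (n+2) = (tauP q * sigmaP) * (tauP q * sigmaP) ^ (n+1) := by
      rw [pow_succ']
    rw [hstep]
    funext z
    have happ : ((tauP q * sigmaP) * (tauP q * sigmaP) ^ (n+1)) z
        = (tauP q * sigmaP) (((tauP q * sigmaP) ^ (n+1)) z) := rfl
    rw [happ, ih, rho_eq_mob]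
    have hdet : Real.sin ((n+2)*θ) * -(Real.sin (n*θ))
        - -(Real.sin ((n+1)*θ)) * Real.sin ((n+1)*θ) ≠ 0 := by
      have e1 : Real.sin (((n:ℝ)+2)*θ) = Real.sin (((n:ℝ)+1)*θ) * Real.cos θ
          + Real.cos (((n:ℝ)+1)*θ) * Real.sin θ := by
        rw [show ((n:ℝ)+2)*θ = ((n:ℝ)+1)*θ + θ by ring, Real.sin_add]
      have e2 : Real.sin ((n:ℝ)*θ) = Real.sin (((n:ℝ)+1)*θ) * Real.cos θ
          - Real.cos (((n:ℝ)+1)*θ) * Real.sin θ := by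
        rw [show (n:ℝ)*θ = ((n:ℝ)+1)*θ - θ by ring, Real.sin_sub]
      have key : Real.sin (((n:ℝ)+2)*θ) * -(Real.sin ((n:ℝ)*θ))
          - -(Real.sin (((n:ℝ)+1)*θ)) * Real.sin (((n:ℝ)+1)*θ) = Real.sin θ ^ 2 := by
        rw [e1, e2]
        have p1 := Real.sin_sq_add_cos_sq θ
        have p2 := Real.sin_sq_add_cos_sq (((n:ℝ)+1)*θ)
        nlinarith [p1, p2]
      rw [key]
      positivity
    rw [mob_mul (lamq q) (-1) 1 0
      (Real.sin ((n+2)*θ)) (-(Real.sin ((n+1)*θ))) (Real.sin ((n+1)*θ)) (-(Real.sin (n*θ)))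
      (by norm_num) hdet z]
    have e1 : lamq q * Real.sin (((n:ℝ)+2)*θ) + -1 * Real.sin (((n:ℝ)+1)*θ)
        = Real.sin ((((n+1):ℕ)+2) * θ) := by
      push_cast
      rw [show ((n:ℝ)+1+2)*θ = (((n:ℝ)+2)*θ) + θ by ring,
          show ((n:ℝ)+1)*θ = (((n:ℝ)+2)*θ) - θ by ring, hrec]
      ring
    have e2 : lamq q * -(Real.sin (((n:ℝ)+1)*θ)) + -1 * -(Real.sin ((n:ℝ)*θ))
        = -(Real.sin ((((n+1):ℕ)+1) * θ)) := by
      push_cast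
      rw [show ((n:ℝ)+1+1)*θ = (((n:ℝ)+1)*θ) + θ by ring,
          show (n:ℝ)*θ = (((n:ℝ)+1)*θ) - θ by ring, hrec]
      ring
    have e3 : 1 * Real.sin (((n:ℝ)+2)*θ) + 0 * Real.sin (((n:ℝ)+1)*θ)
        = Real.sin ((((n+1):ℕ)+1) * θ) := by
      push_cast
      ring_nf
    have e4 : 1 * -(Real.sin (((n:ℝ)+1)*θ)) + 0 * -(Real.sin ((n:ℝ)*θ))
        = -(Real.sin (((n+1):ℕ) * θ)) := by
      push_cast
      ring_nf
    rw [e1, e2, e3, e4]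

lemma rho_pow_order (q : ℕ) (hq : 2 ≤ q) : (tauP q * sigmaP) ^ q = 1 := by
  obtain ⟨n, rfl⟩ : ∃ n, q = n + 1 := ⟨q - 1, by omega⟩
  apply Equiv.ext
  intro z
  have h := congrFun (rho_pow_eq_mob (n+1) hq n) z
  have hone : (1 : Equiv.Perm RInf) z = z := rfl
  rw [hone]
  show ((tauP (n+1) * sigmaP) ^ (n+1)) z = z
  rw [h]
  set θ := Real.pi / ((n+1 : ℕ):ℝ) with hθ
  have hq0 : ((n+1 : ℕ):ℝ) ≠ 0 := by positivity
  have hs : Real.sin θ ≠ 0 := (sin_pi_div_pos (n+1) hq).ne'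
  have hpi : ((n:ℝ)+1) * θ = Real.pi := by
    rw [hθ]
    push_cast
    field_simp
  have h1 : Real.sin (((n:ℝ)+2) * θ) = -Real.sin θ := by
    rw [show ((n:ℝ)+2)*θ = (((n:ℝ)+1)*θ) + θ by ring, hpi, Real.sin_add,
      Real.sin_pi, Real.cos_pi]
    ring
  have h2 : Real.sin (((n:ℝ)+1) * θ) = 0 := by rw [hpi, Real.sin_pi]
  have h3 : Real.sin ((n:ℝ) * θ) = Real.sin θ := by
    rw [show (n:ℝ)*θ = (((n:ℝ)+1)*θ) - θ by ring, hpi, Real.sin_sub,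
      Real.sin_pi, Real.cos_pi]
    ring
  rw [h1, h2, h3]
  cases z with
  | none =>
    simp only [mob, neg_eq_zero]
    rw [if_pos trivial]
    rfl
  | some x =>
    have hd : (0:ℝ) * x + -Real.sin θ ≠ 0 := by simpa using hs
    simp only [mob, if_neg hd, OnePoint.coe_eq_coe]
    show _ = Option.some x
    rw [show ((((-Real.sin θ * x + -0) / (0 * x + -Real.sin θ)) : ℝ) : RInf)
        = Option.some ((-Real.sin θ * x + -0) / (0 * x + -Real.sin θ)) from rfl]
    congr 1
    simp only [zero_mul, mul_zero, neg_zero, add_zero, zero_add, neg_mul, neg_div_neg_eq]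
    field_simp

lemma sigma_mul_self : sigmaP * sigmaP = 1 :=
  Equiv.ext fun z => sigmaFun_invol z

lemma aux_pow {G : Type*} [Group G] (a b : G) (k : ℕ) :
    a * (b * a) ^ k = (a * b) ^ k * a := by
  induction k with
  | zero => simp
  | succ k ih =>
    rw [pow_succ, ← mul_assoc, ih, pow_succ]
    group

/-- the identity `T_1^r = σ τ^{-1} σ T_{-1}^{r-2} τ^{-1}` in the
Hecke group with `q = 2r`. -/
theorem stmt18 (r : ℕ) (hr : 2 ≤ r) :
    (TP (2 * r) 1) ^ r =
      sigmaP * (tauP (2 * r))⁻¹ * sigmaP * (TP (2 * r) (-1)) ^ (r - 2) *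
        (tauP (2 * r))⁻¹ := by
  obtain ⟨k, rfl⟩ : ∃ k, r = k + 2 := ⟨r - 2, by omega⟩
  have hq : 2 ≤ 2 * (k + 2) := by omega
  have hσ : sigmaP * sigmaP = 1 := sigma_mul_self
  have hσinv : sigmaP⁻¹ = sigmaP := inv_eq_of_mul_eq_one_right hσ
  have hT1 : TP (2 * (k+2)) 1 = tauP (2 * (k+2)) * sigmaP := by
    rw [TP, zpow_one]
  have hTm1 : TP (2 * (k+2)) (-1) = (tauP (2 * (k+2)))⁻¹ * sigmaP := by
    rw [TP]
    norm_num
  rw [hT1, hTm1, show (k + 2) - 2 = k from by omega]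
  set τ := tauP (2 * (k+2))
  set σ := sigmaP
  have key : (τ * σ) ^ (2 * (k+2)) = 1 := rho_pow_order (2 * (k+2)) hq
  have h2 : (τ * σ) ^ (k+2) * (τ * σ) ^ (k+2) = 1 := by
    rw [← pow_add, show (k+2) + (k+2) = 2 * (k+2) from by ring]
    exact key
  have hinv : (τ * σ) ^ (k+2) = ((τ * σ) ^ (k+2))⁻¹ := eq_inv_of_mul_eq_one_left h2
  calc (τ * σ) ^ (k+2)
      = ((τ * σ) ^ (k+2))⁻¹ := hinv
    _ = ((τ * σ)⁻¹) ^ (k+2) := by rw [inv_pow]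
    _ = (σ * τ⁻¹) ^ (k+2) := by rw [mul_inv_rev, hσinv]
    _ = (σ * τ⁻¹) * ((σ * τ⁻¹) ^ k * σ) * τ⁻¹ := by
        rw [show (k+2) = (k+1)+1 from rfl, pow_succ, pow_succ']
        group
    _ = (σ * τ⁻¹) * (σ * (τ⁻¹ * σ) ^ k) * τ⁻¹ := by rw [aux_pow]
    _ = σ * τ⁻¹ * σ * (τ⁻¹ * σ) ^ k * τ⁻¹ := by group
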